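/- Let D ⊂ G^{[0,1]} be the set of functions h : [0,1] → G that are nowhere continuous. Then the complement G^{[0,1]} − D, i.e., the set of functions that are continuous at at least one point of [0,1], is contained in a measurable set of ν-measure zero, where ν is the product of Haar probability measures. -/

import Mathlib

open MeasureTheory

/-- Let `G` be a compact Hausdorff second countable topological group with more
than one element, `μ₀` its normalized Haar probability measure, and `ν` the
infinite product measure on `G^[0,1]` (an independent copy of `μ₀` at each
point of `[0,1]`, characterized by its values on cylinder sets). Let
`D ⊆ G^[0,1]` be the set of nowhere continuous functions. Then the complement
`G^[0,1] − D`, i.e. the set of functions continuous at at least one point of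
`[0,1]`, is contained in a measurable set of `ν`-measure zero. -/
theorem compl_nowhere_continuous_contained_in_null {G : Type*} [Group G]
    [TopologicalSpace G] [IsTopologicalGroup G] [CompactSpace G] [T2Space G]
    [SecondCountableTopology G] [Nontrivial G] [MeasurableSpace G] [BorelSpace G]
    (μ₀ : Measure G) [μ₀.IsHaarMeasure] [IsProbabilityMeasure μ₀]
    (ν : Measure (Set.Icc (0 : ℝ) 1 → G))
    (hν : ∀ (s : Finset (Set.Icc (0 : ℝ) 1)) (B : Set.Icc (0 : ℝ) 1 → Set G),
      (∀ i ∈ s, MeasurableSet (B i)) →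
      ν {h : Set.Icc (0 : ℝ) 1 → G | ∀ i ∈ s, h i ∈ B i} = ∏ i ∈ s, μ₀ (B i))
    (D : Set (Set.Icc (0 : ℝ) 1 → G))
    (hD : D = {h : Set.Icc (0 : ℝ) 1 → G | ∀ t, ¬ ContinuousAt h t}) :
    ∃ N : Set (Set.Icc (0 : ℝ) 1 → G), MeasurableSet N ∧ ν N = 0 ∧ Dᶜ ⊆ N := by
  classical
  -- every point has an open neighborhood of Haar measure < 1
  have hsmall : ∀ x : G, ∃ V : Set G, IsOpen V ∧ x ∈ V ∧ μ₀ V < 1 := by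
    intro x
    obtain ⟨g, hg⟩ := exists_ne (1 : G)
    have hxg : x ≠ x * g := by
      intro h
      apply hg
      have h2 : x * 1 = x * g := by rw [mul_one]; exact h
      exact (mul_left_cancel h2).symm
    obtain ⟨A, B, hA, hB, hxA, hxB, hAB⟩ := t2_separation hxg
    refine ⟨A, hA, hxA, ?_⟩
    have h1 : μ₀ A ≤ μ₀ Bᶜ := measure_mono hAB.subset_compl_right
    have h2 : μ₀ Bᶜ = 1 - μ₀ B := by
      rw [measure_compl hB.measurableSet (measure_ne_top _ _), measure_univ]
    have h3 : (0 : ENNReal) < μ₀ B := hB.measure_pos μ₀ ⟨_, hxB⟩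
    calc μ₀ A ≤ 1 - μ₀ B := h2 ▸ h1
      _ < 1 := ENNReal.sub_lt_self ENNReal.one_ne_top one_ne_zero h3.ne'
  choose V hVopen hVmem hVlt using hsmall
  obtain ⟨s, hs⟩ := isCompact_univ.elim_finite_subcover V hVopen
    (fun x _ => Set.mem_iUnion.2 ⟨x, hVmem x⟩)
  -- rational points of an interval
  set S : ℚ → ℚ → Set (Set.Icc (0 : ℝ) 1) := fun a b =>
    {q | (∃ r : ℚ, (q : ℝ) = r) ∧ (q : ℝ) ∈ Set.Ioo (a : ℝ) (b : ℝ)} with hSdef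
  have hScount : ∀ a b, (S a b).Countable := by
    intro a b
    have h1 : (Subtype.val ⁻¹' (Set.range ((↑) : ℚ → ℝ)) :
        Set (Set.Icc (0 : ℝ) 1)).Countable :=
      (Set.countable_range _).preimage Subtype.val_injective
    refine h1.mono ?_
    rintro q ⟨⟨r, hr⟩, -⟩
    exact ⟨r, hr.symm⟩
  have hSinf : ∀ a b : ℚ, 0 ≤ a → a < b → b ≤ 1 → (S a b).Infinite := by
    intro a b ha hab hb
    have hQ : (Set.Ioo a b).Infinite := Set.Ioo_infinite hab
    set φ : ℚ → Set.Icc (0 : ℝ) 1 := fun r =>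
      ⟨max 0 (min 1 (r : ℝ)), le_max_left _ _, max_le zero_le_one (min_le_left _ _)⟩ with hφ
    have hval : ∀ r ∈ Set.Ioo a b, ((φ r : Set.Icc (0:ℝ) 1) : ℝ) = (r : ℝ) := by
      rintro r ⟨h1, h2⟩
      have hr0 : (0 : ℝ) ≤ r := by exact_mod_cast (ha.trans h1.le)
      have hr1 : (r : ℝ) ≤ 1 := by exact_mod_cast (h2.le.trans hb)
      show max 0 (min 1 (r : ℝ)) = (r : ℝ)
      rw [min_eq_right hr1, max_eq_right hr0]
    have hinj : Set.InjOn φ (Set.Ioo a b) := by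
      intro r hr r' hr' hrr
      have : ((φ r : Set.Icc (0:ℝ) 1) : ℝ) = ((φ r' : Set.Icc (0:ℝ) 1) : ℝ) := by rw [hrr]
      rw [hval r hr, hval r' hr'] at this
      exact_mod_cast this
    have himg : φ '' Set.Ioo a b ⊆ S a b := by
      rintro q ⟨r, hr, rfl⟩
      refine ⟨⟨r, hval r hr⟩, ?_⟩
      rw [hval r hr]
      exact ⟨by exact_mod_cast hr.1, by exact_mod_cast hr.2⟩
    exact (hQ.image hinj).mono himg
  -- bad events
  set E : G → ℚ → ℚ → Set (Set.Icc (0 : ℝ) 1 → G) := fun x a b =>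
    {h | ∀ q ∈ S a b, h q ∈ V x} with hEdef
  have hEmeas : ∀ x a b, MeasurableSet (E x a b) := by
    intro x a b
    have : E x a b = ⋂ q ∈ S a b, (fun h : Set.Icc (0:ℝ) 1 → G => h q) ⁻¹' V x := by
      ext h; simp [hEdef]
    rw [this]
    exact MeasurableSet.biInter (hScount a b)
      (fun q _ => (measurable_pi_apply q) (hVopen x).measurableSet)
  have hEnull : ∀ x : G, ∀ a b : ℚ, 0 ≤ a → a < b → b ≤ 1 → ν (E x a b) = 0 := by
    intro x a b ha hab hb
    have key : ∀ n : ℕ, ν (E x a b) ≤ μ₀ (V x) ^ n := by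
      intro n
      obtain ⟨F, hFsub, hFcard⟩ := (hSinf a b ha hab hb).exists_subset_card_eq n
      have hsub : E x a b ⊆ {h | ∀ i ∈ F, h i ∈ V x} :=
        fun h hh i hi => hh i (hFsub hi)
      calc ν (E x a b) ≤ ν {h | ∀ i ∈ F, h i ∈ V x} := measure_mono hsub
        _ = ∏ _i ∈ F, μ₀ (V x) := hν F (fun _ => V x)
            (fun i _ => (hVopen x).measurableSet)
        _ = μ₀ (V x) ^ n := by rw [Finset.prod_const, hFcard]
    have h0 : ν (E x a b) ≤ 0 :=
      ge_of_tendsto' (ENNReal.tendsto_pow_atTop_nhds_zero_of_lt_one (hVlt x)) key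
    exact le_antisymm h0 zero_le
  -- the null set
  set Q : Type := {p : ℚ × ℚ // 0 ≤ p.1 ∧ p.1 < p.2 ∧ p.2 ≤ 1} with hQdef
  refine ⟨⋃ x ∈ (s : Set G), ⋃ p : Q, E x p.1.1 p.1.2, ?_, ?_, ?_⟩
  · exact MeasurableSet.biUnion s.countable_toSet
      (fun x _ => MeasurableSet.iUnion (fun p => hEmeas x p.1.1 p.1.2))
  · rw [measure_biUnion_null_iff s.countable_toSet]
    intro x _
    exact measure_iUnion_null (fun p => hEnull x p.1.1 p.1.2 p.2.1 p.2.2.1 p.2.2.2)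
  · intro h hh
    rw [hD] at hh
    simp only [Set.mem_compl_iff, Set.mem_setOf_eq, not_forall, not_not] at hh
    obtain ⟨t, ht⟩ := hh
    have hts : h t ∈ ⋃ x ∈ s, V x := hs (Set.mem_univ t)
    simp only [Set.mem_iUnion] at hts
    obtain ⟨x, hxs, htx⟩ := hts
    -- continuity gives a real neighborhood
    have hnhds : h ⁻¹' V x ∈ nhds t := ht.preimage_mem_nhds ((hVopen x).mem_nhds htx)
    rw [nhds_subtype] at hnhds
    obtain ⟨U, hU, hUsub⟩ := hnhds
    obtain ⟨u, v, ⟨huv1, huv2⟩, hIoo⟩ := mem_nhds_iff_exists_Ioo_subset.1 hU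
    -- choose rational a b with 0 ≤ a < b ≤ 1 and Ioo a b ⊆ Ioo u v
    have ht0 : (0 : ℝ) ≤ t := t.2.1
    have ht1 : (t : ℝ) ≤ 1 := t.2.2
    have hlt : max u 0 < min v 1 := by
      apply max_lt <;> apply lt_min
      · exact huv1.trans huv2
      · exact lt_of_lt_of_le huv1 ht1
      · exact lt_of_le_of_lt ht0 huv2
      · exact zero_lt_one
    obtain ⟨a, ha1, ha2⟩ := exists_rat_btwn hlt
    obtain ⟨b, hb1, hb2⟩ := exists_rat_btwn ha2
    have ha0 : (0 : ℚ) ≤ a := by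
      have : (0 : ℝ) ≤ a := le_of_lt (lt_of_le_of_lt (le_max_right u 0) ha1)
      exact_mod_cast this
    have habQ : a < b := by exact_mod_cast hb1
    have hb1' : (b : ℚ) ≤ 1 := by
      have : (b : ℝ) ≤ 1 := le_of_lt (lt_of_lt_of_le hb2 (min_le_right v 1))
      exact_mod_cast this
    refine Set.mem_biUnion (Finset.mem_coe.2 hxs) (Set.mem_iUnion.2 ⟨⟨(a, b), ha0, habQ, hb1'⟩, ?_⟩)
    intro q hq
    obtain ⟨-, hq1, hq2⟩ := hq
    have hqIoo : (q : ℝ) ∈ Set.Ioo u v := by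
      constructor
      · exact lt_trans (lt_of_le_of_lt (le_max_left u 0) ha1) hq1
      · exact lt_trans hq2 (lt_of_lt_of_le hb2 (min_le_left v 1))
    exact hUsub (hIoo hqIoo)
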